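/- For every real θ > 0, sup over integers k ≥ 1 of (H_k − 1)/(1 + k/θ) is strictly less than ω(θ). -/

import Mathlib

/-- The `k`-th harmonic number `H k = ∑_{i=1}^{k} 1/i` (as a real number). -/
noncomputable def H (k : ℕ) : ℝ := ∑ i ∈ Finset.Icc 1 k, (1 : ℝ) / i

/-- For every `θ > 0`, `ω̄(θ) = sup_{k ≥ 1} (H k − 1)/(1 + k/θ)` is strictly less
than `ω(θ)`, the unique root in `(0, θ]` of `x + 1 = ln (θ / x)`. -/

lemma H_succ (k : ℕ) : H (k+1) = H k + 1/(k+1) := by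
  unfold H
  rw [Finset.sum_Icc_succ_top (by omega)]
  push_cast; ring

lemma H_one : H 1 = 1 := by simp [H]

lemma H_le (k : ℕ) (hk : 2 ≤ k) : H k ≤ Real.log k + 3/2 - Real.log 2 := by
  induction k with
  | zero => omega
  | succ n ih =>
    rcases Nat.lt_or_ge n 2 with h2 | h2
    · interval_cases n
      · omega
      · rw [H_succ, H_one]
        norm_num
    · have hn : (0:ℝ) < n := by positivity
      have h1 : Real.log ((n:ℝ)/(n+1)) ≤ (n:ℝ)/(n+1) - 1 :=
        Real.log_le_sub_one_of_pos (by positivity)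
      rw [Real.log_div hn.ne' (by positivity)] at h1
      have h3 : (n:ℝ)/(n+1) - 1 = -(1/(n+1)) := by field_simp; ring
      rw [H_succ]
      push_cast
      have := ih h2
      push_cast at this
      linarith

lemma log_le_omega (θ ω : ℝ) (hθ : 0 < θ) (hω : 0 < ω)
    (hlog : ω + 1 = Real.log (θ / ω)) (k : ℕ) (hk : 1 ≤ k) :
    Real.log k ≤ ω * (1 + (k:ℝ)/θ) := by
  have hk0 : (0:ℝ) < k := by exact_mod_cast hk
  have h1 : Real.log ((k:ℝ)*ω/θ) ≤ (k:ℝ)*ω/θ - 1 :=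
    Real.log_le_sub_one_of_pos (by positivity)
  rw [Real.log_div (by positivity) hθ.ne', Real.log_mul hk0.ne' hω.ne'] at h1
  rw [Real.log_div hθ.ne' hω.ne'] at hlog
  have h2 : ω * (1 + (k:ℝ)/θ) = ω + (k:ℝ)*ω/θ := by ring
  linarith

lemma log_le_two_sqrt (k : ℕ) : Real.log k ≤ 2 * Real.sqrt k := by
  rcases Nat.eq_zero_or_pos k with rfl | hk
  · simp
  have h0 : (0:ℝ) < k := by positivity
  have h1 : Real.log (Real.sqrt k) ≤ Real.sqrt k - 1 :=
    Real.log_le_sub_one_of_pos (Real.sqrt_pos.mpr h0)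
  rw [Real.log_sqrt (le_of_lt h0)] at h1
  linarith

theorem omega_bar_lt_omega (θ ω : ℝ) (hθ : 0 < θ)
    (hω : 0 < ω ∧ ω ≤ θ ∧ ω + 1 = Real.log (θ / ω)) :
    sSup {y : ℝ | ∃ k : ℕ, 1 ≤ k ∧ y = (H k - 1) / (1 + (k : ℝ) / θ)} < ω := by
  obtain ⟨hω0, hωθ, hlog⟩ := hω
  set c : ℝ := Real.log 2 - 1/2 with hc_def
  clear_value c
  have hc : 0 < c := by
    have := Real.log_two_gt_d9
    rw [hc_def]; linarith
  set K : ℕ := max 2 ⌈(4*θ/ω)^2⌉₊ with hK_def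
  have hK2 : 2 ≤ K := le_max_left _ _
  have hKd : (4*θ/ω)^2 ≤ (K:ℝ) := by
    calc (4*θ/ω)^2 ≤ (⌈(4*θ/ω)^2⌉₊ : ℝ) := Nat.le_ceil _
    _ ≤ (K:ℝ) := by exact_mod_cast Nat.cast_le.mpr (le_max_right _ _)
  clear_value K
  have hKθ : (0:ℝ) < 1 + (K:ℝ)/θ := by positivity
  set ε : ℝ := min (ω/2) (c/(1 + (K:ℝ)/θ)) with hε_def
  have hε0 : 0 < ε := lt_min (by positivity) (by positivity)
  have hεω : ε ≤ ω/2 := min_le_left _ _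
  have hεc : ε ≤ c/(1 + (K:ℝ)/θ) := min_le_right _ _
  clear_value ε
  have key : ∀ y ∈ {y : ℝ | ∃ k : ℕ, 1 ≤ k ∧ y = (H k - 1) / (1 + (k : ℝ) / θ)},
      y ≤ ω - ε := by
    rintro y ⟨k, hk1, rfl⟩
    have hkR : (0:ℝ) < k := by exact_mod_cast hk1
    have hd : (0:ℝ) < 1 + (k:ℝ)/θ := by positivity
    rcases eq_or_lt_of_le hk1 with h1 | hk2
    · -- k = 1
      rw [← h1, H_one]
      simp only [sub_self, zero_div]
      linarith
    · have hk2 : 2 ≤ k := hk2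
      have hHk : H k - 1 ≤ Real.log k - c := by
        have := H_le k hk2; rw [hc_def]; linarith
      rcases le_or_gt k K with hkK | hkK
      · -- small k : use the c gap
        have hlogk := log_le_omega θ ω hθ hω0 hlog k hk1
        have hnum : H k - 1 ≤ ω * (1 + (k:ℝ)/θ) - c := by linarith
        have step1 : (H k - 1) / (1 + (k:ℝ)/θ) ≤ ω - c/(1 + (k:ℝ)/θ) := by
          rw [div_le_iff₀ hd]
          have : c/(1 + (k:ℝ)/θ) * (1 + (k:ℝ)/θ) = c := by field_simp
          nlinarith [this]
        have hkKR : (k:ℝ) ≤ (K:ℝ) := Nat.cast_le.mpr hkK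
        have step2 : c/(1 + (K:ℝ)/θ) ≤ c/(1 + (k:ℝ)/θ) := by gcongr
        have step3 : ε ≤ c/(1 + (K:ℝ)/θ) := hεc
        linarith
      · -- large k : value is at most ω/2
        have hlog0 : 0 ≤ Real.log k := Real.log_nonneg (by exact_mod_cast hk1)
        have hsqrt : 4*θ/ω ≤ Real.sqrt k := by
          have h1 : Real.sqrt ((4*θ/ω)^2) ≤ Real.sqrt k := by
            apply Real.sqrt_le_sqrt
            calc (4*θ/ω)^2 ≤ (K:ℝ) := hKd
            _ ≤ (k:ℝ) := by exact_mod_cast Nat.cast_le.mpr hkK.le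
          rwa [Real.sqrt_sq (by positivity)] at h1
        have hsq0 : (0:ℝ) < Real.sqrt k := Real.sqrt_pos.mpr hkR
        have b1 : (H k - 1) / (1 + (k:ℝ)/θ) ≤ Real.log k / ((k:ℝ)/θ) := by
          apply div_le_div₀ (by linarith) (by linarith) (by positivity)
          linarith
        have b2 : Real.log k / ((k:ℝ)/θ) = θ * Real.log k / k := by
          field_simp
        have b3 : θ * Real.log k / k ≤ θ * (2 * Real.sqrt k) / k := by
          gcongr
          exact log_le_two_sqrt k
        have hkk : (k:ℝ) = Real.sqrt k * Real.sqrt k := (Real.mul_self_sqrt hkR.le).symm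
        have b4 : θ * (2 * Real.sqrt k) / k = 2*θ / Real.sqrt k := by
          rw [div_eq_div_iff hkR.ne' hsq0.ne']
          linear_combination (-2*θ) * hkk
        have b5 : 2*θ / Real.sqrt k ≤ 2*θ / (4*θ/ω) := by
          gcongr
        have b6 : 2*θ / (4*θ/ω) = ω/2 := by field_simp; ring
        have : (H k - 1) / (1 + (k:ℝ)/θ) ≤ ω/2 := by
          rw [b2] at b1; rw [b4] at b3; rw [b6] at b5; linarith
        linarith
  have hub : sSup {y : ℝ | ∃ k : ℕ, 1 ≤ k ∧ y = (H k - 1) / (1 + (k : ℝ) / θ)} ≤ ω - ε :=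
    Real.sSup_le key (by linarith)
  linarith
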